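/- Let g: [0,1] → ℝ₊ be continuous with g(0)=g(1)=0, and define the relation s ≈_g t by: s ∼_g t (i.e. d_g(s,t)=0) and either g(r) > g(s) for every r ∈ (s∧t, s∨t), or (s∧t = min cl_g(s) and s∨t = max cl_g(s)), where cl_g(s) is the d_g-equivalence class of s. Then the set {(s,t) ∈ [0,1]² : s ≈_g t} is closed in [0,1]². -/
import Mathlib

/-- The coding pseudo-distance `d_g(s,t) = g(s) + g(t) − 2 min_{[s∧t,s∨t]} g`. -/
noncomputable def dg (g : ℝ → ℝ) (s t : ℝ) : ℝ :=
  g s + g t - 2 * sInf (g '' Set.Icc (min s t) (max s t))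

/-- The `d_g`-equivalence class of `s` within `[0,1]`. -/
def clg (g : ℝ → ℝ) (s : ℝ) : Set ℝ :=
  {u | u ∈ Set.Icc (0:ℝ) 1 ∧ dg g s u = 0}

/-- The relation `s ≈_g t`. -/
def approxg (g : ℝ → ℝ) (s t : ℝ) : Prop :=
  dg g s t = 0 ∧
    ((∀ r ∈ Set.Ioo (min s t) (max s t), g s < g r) ∨
      (min s t = sInf (clg g s) ∧ max s t = sSup (clg g s)))

open Set Filter Topology

section Aux

variable {g : ℝ → ℝ}

lemma icc_sub {s t : ℝ} (hs : s ∈ Set.Icc (0:ℝ) 1) (ht : t ∈ Set.Icc (0:ℝ) 1) :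
    Set.Icc (min s t) (max s t) ⊆ Set.Icc (0:ℝ) 1 :=
  Set.Icc_subset_Icc (le_min hs.1 ht.1) (max_le hs.2 ht.2)

lemma bdd_img (hg : ContinuousOn g (Set.Icc (0:ℝ) 1)) {s t : ℝ}
    (hs : s ∈ Set.Icc (0:ℝ) 1) (ht : t ∈ Set.Icc (0:ℝ) 1) :
    BddBelow (g '' Set.Icc (min s t) (max s t)) :=
  (isCompact_Icc.image_of_continuousOn (hg.mono (icc_sub hs ht))).bddBelow

lemma dg_zero_elim (hg : ContinuousOn g (Set.Icc (0:ℝ) 1)) {s t : ℝ}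
    (hs : s ∈ Set.Icc (0:ℝ) 1) (ht : t ∈ Set.Icc (0:ℝ) 1) (h : dg g s t = 0) :
    g t = g s ∧ ∀ r ∈ Set.Icc (min s t) (max s t), g s ≤ g r := by
  have hbd := bdd_img hg hs ht
  have hsmem : g s ∈ g '' Set.Icc (min s t) (max s t) :=
    ⟨s, ⟨min_le_left _ _, le_max_left _ _⟩, rfl⟩
  have htmem : g t ∈ g '' Set.Icc (min s t) (max s t) :=
    ⟨t, ⟨min_le_right _ _, le_max_right _ _⟩, rfl⟩
  have h1 := csInf_le hbd hsmem
  have h2 := csInf_le hbd htmem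
  unfold dg at h
  refine ⟨by linarith, fun r hr => ?_⟩
  have := csInf_le hbd ⟨r, hr, rfl⟩
  linarith

lemma dg_zero_intro (hg : ContinuousOn g (Set.Icc (0:ℝ) 1)) {s t : ℝ}
    (hs : s ∈ Set.Icc (0:ℝ) 1) (ht : t ∈ Set.Icc (0:ℝ) 1) (het : g t = g s)
    (h : ∀ r ∈ Set.Icc (min s t) (max s t), g s ≤ g r) : dg g s t = 0 := by
  have hbd := bdd_img hg hs ht
  have hsmem : g s ∈ g '' Set.Icc (min s t) (max s t) :=
    ⟨s, ⟨min_le_left _ _, le_max_left _ _⟩, rfl⟩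
  have heq : sInf (g '' Set.Icc (min s t) (max s t)) = g s :=
    le_antisymm (csInf_le hbd hsmem)
      (le_csInf ⟨g s, hsmem⟩ (by rintro x ⟨r, hr, rfl⟩; exact h r hr))
  unfold dg
  rw [heq, het]; ring

lemma dg_self (s : ℝ) : dg g s s = 0 := by
  unfold dg
  rw [min_self, max_self, Set.Icc_self, Set.image_singleton, csInf_singleton]
  ring

lemma sInf_le_bound (hg : ContinuousOn g (Set.Icc (0:ℝ) 1)) {δ ε : ℝ}
    (hδ : ∀ x ∈ Set.Icc (0:ℝ) 1, ∀ y ∈ Set.Icc (0:ℝ) 1, |x - y| ≤ δ → |g x - g y| ≤ ε)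
    {a b a' b' : ℝ} (ha : a ∈ Set.Icc (0:ℝ) 1) (hb : b ∈ Set.Icc (0:ℝ) 1)
    (ha' : a' ∈ Set.Icc (0:ℝ) 1) (hb' : b' ∈ Set.Icc (0:ℝ) 1)
    (hab : a ≤ b) (hab' : a' ≤ b') (h1 : |a - a'| ≤ δ) (h2 : |b - b'| ≤ δ) :
    sInf (g '' Set.Icc a' b') ≤ sInf (g '' Set.Icc a b) + ε := by
  have hδ0 : 0 ≤ δ := le_trans (abs_nonneg _) h1
  have hsub : Set.Icc a b ⊆ Set.Icc (0:ℝ) 1 := Set.Icc_subset_Icc ha.1 hb.2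
  have hsub' : Set.Icc a' b' ⊆ Set.Icc (0:ℝ) 1 := Set.Icc_subset_Icc ha'.1 hb'.2
  obtain ⟨x, hx, hxeq⟩ :=
    isCompact_Icc.exists_sInf_image_eq (Set.nonempty_Icc.2 hab) (hg.mono hsub)
  set y := max a' (min x b') with hy
  have hymem : y ∈ Set.Icc a' b' := ⟨le_max_left _ _, max_le hab' (min_le_right _ _)⟩
  have h1' := abs_le.1 h1
  have h2' := abs_le.1 h2
  have habs : |x - y| ≤ δ := by
    rw [abs_le]
    rcases le_total x a' with h | h
    · have hyv : y = a' := by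
        rw [hy, min_eq_left (h.trans hab'), max_eq_left h]
      rw [hyv]; constructor <;> linarith [hx.1, hx.2]
    rcases le_total b' x with h' | h'
    · have hyv : y = b' := by rw [hy, min_eq_right h', max_eq_right hab']
      rw [hyv]; constructor <;> linarith [hx.1, hx.2]
    · have hyv : y = x := by rw [hy, min_eq_left h', max_eq_right h]
      rw [hyv]; constructor <;> linarith
  have hgy := abs_le.1 (hδ x (hsub hx) y (hsub' hymem) habs)
  have hle : sInf (g '' Set.Icc a' b') ≤ g y :=
    csInf_le (isCompact_Icc.image_of_continuousOn (hg.mono hsub')).bddBelow ⟨y, hymem, rfl⟩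
  rw [hxeq]
  linarith [hgy.1, hgy.2]

lemma sInf_tendsto (hg : ContinuousOn g (Set.Icc (0:ℝ) 1))
    {sn tn : ℕ → ℝ} {s t : ℝ}
    (hsn : ∀ n, sn n ∈ Set.Icc (0:ℝ) 1) (htn : ∀ n, tn n ∈ Set.Icc (0:ℝ) 1)
    (hs : s ∈ Set.Icc (0:ℝ) 1) (ht : t ∈ Set.Icc (0:ℝ) 1)
    (h1 : Tendsto sn atTop (𝓝 s)) (h2 : Tendsto tn atTop (𝓝 t)) :
    Tendsto (fun n => sInf (g '' Set.Icc (min (sn n) (tn n)) (max (sn n) (tn n)))) atTop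
      (𝓝 (sInf (g '' Set.Icc (min s t) (max s t)))) := by
  rw [Metric.tendsto_atTop]
  intro ε hε
  have huc := isCompact_Icc.uniformContinuousOn_of_continuous hg
  rw [Metric.uniformContinuousOn_iff] at huc
  obtain ⟨δ, hδ0, hδ⟩ := huc (ε / 2) (by linarith)
  have hδ' : ∀ x ∈ Set.Icc (0:ℝ) 1, ∀ y ∈ Set.Icc (0:ℝ) 1, |x - y| ≤ δ / 2 →
      |g x - g y| ≤ ε / 2 := by
    intro x hx y hy hxy
    have := hδ x hx y hy (by rw [Real.dist_eq]; linarith)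
    rw [Real.dist_eq] at this
    linarith
  have hmin : Tendsto (fun n => min (sn n) (tn n)) atTop (𝓝 (min s t)) := h1.min h2
  have hmax : Tendsto (fun n => max (sn n) (tn n)) atTop (𝓝 (max s t)) := h1.max h2
  rw [Metric.tendsto_atTop] at hmin hmax
  obtain ⟨N1, hN1⟩ := hmin (δ / 2) (by linarith)
  obtain ⟨N2, hN2⟩ := hmax (δ / 2) (by linarith)
  refine ⟨max N1 N2, fun n hn => ?_⟩
  have e1 := hN1 n (le_trans (le_max_left _ _) hn)
  have e2 := hN2 n (le_trans (le_max_right _ _) hn)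
  rw [Real.dist_eq] at e1 e2 ⊢
  have hminn : min (sn n) (tn n) ∈ Set.Icc (0:ℝ) 1 :=
    ⟨le_min (hsn n).1 (htn n).1, (min_le_left _ _).trans (hsn n).2⟩
  have hmaxn : max (sn n) (tn n) ∈ Set.Icc (0:ℝ) 1 :=
    ⟨(hsn n).1.trans (le_max_left _ _), max_le (hsn n).2 (htn n).2⟩
  have hmins : min s t ∈ Set.Icc (0:ℝ) 1 :=
    ⟨le_min hs.1 ht.1, (min_le_left _ _).trans hs.2⟩
  have hmaxs : max s t ∈ Set.Icc (0:ℝ) 1 :=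
    ⟨hs.1.trans (le_max_left _ _), max_le hs.2 ht.2⟩
  have b1 := sInf_le_bound hg hδ' hmins hmaxs hminn hmaxn (min_le_max) (min_le_max)
    (by rw [abs_sub_comm]; exact e1.le) (by rw [abs_sub_comm]; exact e2.le)
  have b2 := sInf_le_bound hg hδ' hminn hmaxn hmins hmaxs (min_le_max) (min_le_max)
    e1.le e2.le
  rw [abs_sub_lt_iff]
  constructor <;> linarith

end Aux

/-- For `g : [0,1] → ℝ₊` continuous with `g(0) = g(1) = 0`, the graph
`{(s,t) ∈ [0,1]² : s ≈_g t}` is closed. -/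
theorem approxg_isClosed
    (g : ℝ → ℝ) (hg : ContinuousOn g (Set.Icc (0:ℝ) 1))
    (hnn : ∀ s ∈ Set.Icc (0:ℝ) 1, 0 ≤ g s)
    (h0 : g 0 = 0) (h1 : g 1 = 0) :
    IsClosed {p : ℝ × ℝ |
      p.1 ∈ Set.Icc (0:ℝ) 1 ∧ p.2 ∈ Set.Icc (0:ℝ) 1 ∧ approxg g p.1 p.2} := by
  apply IsSeqClosed.isClosed
  intro x p hx hp
  have hxs : Tendsto (fun n => (x n).1) atTop (𝓝 p.1) :=
    (continuous_fst.tendsto p).comp hp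
  have hxt : Tendsto (fun n => (x n).2) atTop (𝓝 p.2) :=
    (continuous_snd.tendsto p).comp hp
  have hs1 : ∀ n, (x n).1 ∈ Set.Icc (0:ℝ) 1 := fun n => (hx n).1
  have ht1 : ∀ n, (x n).2 ∈ Set.Icc (0:ℝ) 1 := fun n => (hx n).2.1
  have hsI : p.1 ∈ Set.Icc (0:ℝ) 1 :=
    isClosed_Icc.mem_of_tendsto hxs (Filter.Eventually.of_forall hs1)
  have htI : p.2 ∈ Set.Icc (0:ℝ) 1 :=
    isClosed_Icc.mem_of_tendsto hxt (Filter.Eventually.of_forall ht1)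
  have hgcont : ∀ {u : ℝ} {un : ℕ → ℝ}, u ∈ Set.Icc (0:ℝ) 1 →
      (∀ n, un n ∈ Set.Icc (0:ℝ) 1) → Tendsto un atTop (𝓝 u) →
      Tendsto (fun n => g (un n)) atTop (𝓝 (g u)) := by
    intro u un hu hun h
    exact (hg u hu).tendsto.comp
      (tendsto_nhdsWithin_iff.2 ⟨h, Filter.Eventually.of_forall hun⟩)
  have hdgn : ∀ n, dg g (x n).1 (x n).2 = 0 := fun n => (hx n).2.2.1
  have hmlim := sInf_tendsto hg hs1 ht1 hsI htI hxs hxt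
  have hglim_s := hgcont hsI hs1 hxs
  have hglim_t := hgcont htI ht1 hxt
  have hdg : dg g p.1 p.2 = 0 := by
    have hT : Tendsto (fun n => dg g (x n).1 (x n).2) atTop (𝓝 (dg g p.1 p.2)) := by
      unfold dg
      exact (hglim_s.add hglim_t).sub (tendsto_const_nhds.mul hmlim)
    simp only [hdgn] at hT
    exact (tendsto_nhds_unique hT tendsto_const_nhds)
  obtain ⟨hgt, hmab⟩ := dg_zero_elim hg hsI htI hdg
  refine ⟨hsI, htI, hdg, ?_⟩
  by_cases hst : p.1 = p.2
  · left
    intro r hr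
    rw [hst, min_self, max_self] at hr
    exact absurd (hr.1.trans hr.2) (lt_irrefl _)
  by_cases hA : ∀ r ∈ Set.Ioo (min p.1 p.2) (max p.1 p.2), g p.1 < g r
  · exact Or.inl hA
  push_neg at hA
  obtain ⟨r₀, hr₀, hr₀le⟩ := hA
  have hgr₀ : g r₀ = g p.1 := le_antisymm hr₀le (hmab r₀ ⟨hr₀.1.le, hr₀.2.le⟩)
  -- class facts
  have hclsub : clg g p.1 ⊆ Set.Icc (0:ℝ) 1 := fun u hu => hu.1
  have hsmem_cl : p.1 ∈ clg g p.1 := ⟨hsI, dg_self p.1⟩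
  have htmem_cl : p.2 ∈ clg g p.1 := ⟨htI, hdg⟩
  have hbddB : BddBelow (clg g p.1) := BddBelow.mono hclsub bddBelow_Icc
  have hbddA : BddAbove (clg g p.1) := BddAbove.mono hclsub bddAbove_Icc
  have hInf_le : sInf (clg g p.1) ≤ min p.1 p.2 :=
    le_min (csInf_le hbddB hsmem_cl) (csInf_le hbddB htmem_cl)
  have hle_Sup : max p.1 p.2 ≤ sSup (clg g p.1) :=
    max_le (le_csSup hbddA hsmem_cl) (le_csSup hbddA htmem_cl)
  have hseq : ∀ n, g (x n).2 = g (x n).1 ∧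
      ∀ r ∈ Set.Icc (min (x n).1 (x n).2) (max (x n).1 (x n).2), g (x n).1 ≤ g r :=
    fun n => dg_zero_elim hg (hs1 n) (ht1 n) (hdgn n)
  have hminT : Tendsto (fun n => min (x n).1 (x n).2) atTop (𝓝 (min p.1 p.2)) :=
    hxs.min hxt
  have hmaxT : Tendsto (fun n => max (x n).1 (x n).2) atTop (𝓝 (max p.1 p.2)) :=
    hxs.max hxt
  right
  constructor
  · -- min p.1 p.2 = sInf (clg g p.1)
    refine le_antisymm ?_ hInf_le
    by_contra hcon
    push_neg at hcon
    obtain ⟨u, hu, hua⟩ := exists_lt_of_csInf_lt ⟨p.1, hsmem_cl⟩ hcon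
    obtain ⟨hgu, hmu⟩ := dg_zero_elim hg hsI hu.1 hu.2
    have hu_le_s : u ≤ p.1 := hua.le.trans (min_le_left _ _)
    rw [min_eq_right hu_le_s, max_eq_left hu_le_s] at hmu
    have hub : ∀ r ∈ Set.Icc u (max p.1 p.2), g p.1 ≤ g r := by
      intro r hr
      rcases le_total r (min p.1 p.2) with h | h
      · exact hmu r ⟨hr.1, h.trans (min_le_left _ _)⟩
      · exact hmab r ⟨h, hr.2⟩
    have ev1 : ∀ᶠ n in atTop, u < min (x n).1 (x n).2 :=
      hminT.eventually (eventually_gt_nhds hua)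
    have ev2 : ∀ᶠ n in atTop, min (x n).1 (x n).2 < r₀ :=
      hminT.eventually (eventually_lt_nhds hr₀.1)
    have ev3 : ∀ᶠ n in atTop, r₀ < max (x n).1 (x n).2 :=
      hmaxT.eventually (eventually_gt_nhds hr₀.2)
    obtain ⟨n, e1, e2, e3⟩ := (ev1.and (ev2.and ev3)).exists
    have hgan : g (min (x n).1 (x n).2) = g (x n).1 := by
      rcases min_choice (x n).1 (x n).2 with h | h <;> rw [h]
      exact (hseq n).1
    have hcn_ge : g p.1 ≤ g (x n).1 := by
      have := hub (min (x n).1 (x n).2) ⟨e1.le, (e2.trans hr₀.2).le⟩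
      rwa [hgan] at this
    rcases (hx n).2.2.2 with hAn | hBn
    · have := hAn r₀ ⟨e2, e3⟩
      rw [hgr₀] at this
      linarith
    · have hcn_le : g (x n).1 ≤ g p.1 := by
        have := (hseq n).2 r₀ ⟨e2.le, e3.le⟩
        rwa [hgr₀] at this
      have hc_eq : g (x n).1 = g p.1 := le_antisymm hcn_le hcn_ge
      have hu_le_sn : u ≤ (x n).1 := e1.le.trans (min_le_left _ _)
      have hdgu : dg g (x n).1 u = 0 := by
        refine dg_zero_intro hg (hs1 n) hu.1 (hgu.trans hc_eq.symm) ?_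
        rw [min_eq_right hu_le_sn, max_eq_left hu_le_sn]
        intro r hr
        rcases le_total r (max p.1 p.2) with h | h
        · rw [hc_eq]; exact hub r ⟨hr.1, h⟩
        · refine (hseq n).2 r ⟨(e2.trans (hr₀.2.trans_le h)).le, hr.2.trans (le_max_left _ _)⟩
      have hu_mem : u ∈ clg g (x n).1 := ⟨hu.1, hdgu⟩
      have hbdn : BddBelow (clg g (x n).1) :=
        BddBelow.mono (fun y hy => hy.1) bddBelow_Icc
      have : sInf (clg g (x n).1) ≤ u := csInf_le hbdn hu_mem
      rw [← hBn.1] at this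
      exact absurd e1 (not_lt.2 this)
  · -- max p.1 p.2 = sSup (clg g p.1)
    refine le_antisymm hle_Sup ?_
    by_contra hcon
    push_neg at hcon
    obtain ⟨v, hv, hbv⟩ := exists_lt_of_lt_csSup ⟨p.1, hsmem_cl⟩ hcon
    obtain ⟨hgv, hmv⟩ := dg_zero_elim hg hsI hv.1 hv.2
    have hs_le_v : p.1 ≤ v := (le_max_left p.1 p.2).trans hbv.le
    rw [min_eq_left hs_le_v, max_eq_right hs_le_v] at hmv
    have hav : ∀ r ∈ Set.Icc (min p.1 p.2) v, g p.1 ≤ g r := by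
      intro r hr
      rcases le_total r (max p.1 p.2) with h | h
      · exact hmab r ⟨hr.1, h⟩
      · exact hmv r ⟨(le_max_left _ _).trans h, hr.2⟩
    have ev2 : ∀ᶠ n in atTop, min (x n).1 (x n).2 < r₀ :=
      hminT.eventually (eventually_lt_nhds hr₀.1)
    have ev3 : ∀ᶠ n in atTop, r₀ < max (x n).1 (x n).2 :=
      hmaxT.eventually (eventually_gt_nhds hr₀.2)
    have ev4 : ∀ᶠ n in atTop, max (x n).1 (x n).2 < v :=
      hmaxT.eventually (eventually_lt_nhds hbv)
    obtain ⟨n, e2, e3, e4⟩ := (ev2.and (ev3.and ev4)).exists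
    have hgbn : g (max (x n).1 (x n).2) = g (x n).1 := by
      rcases max_choice (x n).1 (x n).2 with h | h <;> rw [h]
      exact (hseq n).1
    have hcn_ge : g p.1 ≤ g (x n).1 := by
      have := hav (max (x n).1 (x n).2) ⟨(hr₀.1.trans e3).le, e4.le⟩
      rwa [hgbn] at this
    rcases (hx n).2.2.2 with hAn | hBn
    · have := hAn r₀ ⟨e2, e3⟩
      rw [hgr₀] at this
      linarith
    · have hcn_le : g (x n).1 ≤ g p.1 := by
        have := (hseq n).2 r₀ ⟨e2.le, e3.le⟩
        rwa [hgr₀] at this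
      have hc_eq : g (x n).1 = g p.1 := le_antisymm hcn_le hcn_ge
      have hsn_le_v : (x n).1 ≤ v := (le_max_left (x n).1 (x n).2).trans e4.le
      have hdgv : dg g (x n).1 v = 0 := by
        refine dg_zero_intro hg (hs1 n) hv.1 (hgv.trans hc_eq.symm) ?_
        rw [min_eq_left hsn_le_v, max_eq_right hsn_le_v]
        intro r hr
        rcases le_total (min p.1 p.2) r with h | h
        · rw [hc_eq]; exact hav r ⟨h, hr.2⟩
        · exact (hseq n).2 r ⟨(min_le_left _ _).trans hr.1, h.trans (hr₀.1.trans e3).le⟩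
      have hv_mem : v ∈ clg g (x n).1 := ⟨hv.1, hdgv⟩
      have hbdn : BddAbove (clg g (x n).1) :=
        BddAbove.mono (fun y hy => hy.1) bddAbove_Icc
      have : v ≤ sSup (clg g (x n).1) := le_csSup hbdn hv_mem
      rw [← hBn.2] at this
      exact absurd e4 (not_lt.2 this)
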